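/- arXiv:1407.0194 — 3 statements merged into one kernel-verified Lean document; each statement's English description precedes it below -/
import Mathlib

section
/- Let X be a Banach space, Ω a metric space, and μ a σ-finite Borel measure on Ω that is strictly positive (every nonempty open ball has positive measure) and locally finite (every point has a neighborhood of finite measure). Let N : Ω → B(X) be strongly continuous (t ↦ N(t)x is continuous for every x ∈ X). Suppose that for every f ∈ L¹(Ω, μ) there exists a bounded operator N_f ∈ B(X) with ⟨N_f x, x'⟩ = ∫_Ω f(t) ⟨N(t)x, x'⟩ dμ(t) for all x ∈ X, x' ∈ X', and that the set {N_f : ‖f‖_{L¹} ≤ 1} is R-bounded with constant C. Then the set {N(t) : t ∈ Ω} is R-bounded with constant at most C. -/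
open MeasureTheory

/-- The Rademacher average `2^(-n) ∑_{ε ∈ {-1,1}^n} ‖∑ i ε_i v_i‖`. -/
noncomputable def radAvg {X : Type*} [NormedAddCommGroup X] (n : ℕ) (v : Fin n → X) : ℝ :=
  ((2 : ℝ) ^ n)⁻¹ * ∑ ε : Fin n → Bool, ‖∑ i, (if ε i then v i else -v i)‖

/-- `R`-boundedness of a set of operators with constant `C`. -/
def RBounded {X : Type*} [NormedAddCommGroup X] [NormedSpace ℂ X]
    (τ : Set (X →L[ℂ] X)) (C : ℝ) : Prop :=
  ∀ (n : ℕ) (T : Fin n → X →L[ℂ] X), (∀ i, T i ∈ τ) → ∀ x : Fin n → X,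
    radAvg n (fun i => T i (x i)) ≤ C * radAvg n x

lemma radAvg_le_radAvg_add {X : Type*} [NormedAddCommGroup X] (n : ℕ) (a b : Fin n → X) :
    radAvg n a ≤ radAvg n b + ∑ i, ‖a i - b i‖ := by
  classical
  unfold radAvg
  set D := ∑ i, ‖a i - b i‖ with hD
  have key : ∀ ε : Fin n → Bool,
      ‖∑ i, (if ε i then a i else -a i)‖ ≤
        ‖∑ i, (if ε i then b i else -b i)‖ + D := by
    intro ε
    have h1 : ‖∑ i, (if ε i then a i else -a i) - ∑ i, (if ε i then b i else -b i)‖ ≤ D := by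
      rw [← Finset.sum_sub_distrib]
      refine (norm_sum_le _ _).trans (Finset.sum_le_sum fun i _ => ?_)
      by_cases h : ε i <;> simp [h, neg_add_eq_sub, norm_sub_rev]
    have h2 := norm_sub_norm_le (∑ i, (if ε i then a i else -a i))
      (∑ i, (if ε i then b i else -b i))
    linarith
  have hsum : ∑ ε : Fin n → Bool, ‖∑ i, (if ε i then a i else -a i)‖ ≤
      (∑ ε : Fin n → Bool, ‖∑ i, (if ε i then b i else -b i)‖) + (2:ℝ)^n * D := by
    have := Finset.sum_le_sum (fun ε _ => key ε) (s := (Finset.univ : Finset (Fin n → Bool)))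
    have hcard : ((Finset.univ : Finset (Fin n → Bool)).card : ℝ) = 2 ^ n := by simp
    rw [Finset.sum_add_distrib, Finset.sum_const, nsmul_eq_mul, hcard] at this
    exact this
  have h2n : (0:ℝ) < ((2:ℝ)^n)⁻¹ := by positivity
  calc ((2:ℝ)^n)⁻¹ * ∑ ε : Fin n → Bool, ‖∑ i, (if ε i then a i else -a i)‖
      ≤ ((2:ℝ)^n)⁻¹ * ((∑ ε : Fin n → Bool, ‖∑ i, (if ε i then b i else -b i)‖) + (2:ℝ)^n * D) :=
        mul_le_mul_of_nonneg_left hsum h2n.le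
    _ = ((2:ℝ)^n)⁻¹ * (∑ ε : Fin n → Bool, ‖∑ i, (if ε i then b i else -b i)‖) + D := by
        field_simp

/-- Let `Ω` be a metric space with a σ-finite, strictly positive, locally
finite Borel measure `μ`, and let `N : Ω → B(X)` be strongly continuous. If for every
`f ∈ L¹(Ω,μ)` there is `N_f ∈ B(X)` with `⟨N_f x, x'⟩ = ∫ f(t)⟨N(t)x, x'⟩ dμ(t)` and
`{N_f : ‖f‖_{L¹} ≤ 1}` is `R`-bounded with constant `C`, then `{N(t) : t ∈ Ω}` is
`R`-bounded with constant at most `C`. -/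
theorem stmt_13 {X : Type*} [NormedAddCommGroup X] [NormedSpace ℂ X] [CompleteSpace X]
    {Ω : Type*} [MetricSpace Ω] [MeasurableSpace Ω] [BorelSpace Ω]
    (μ : Measure Ω) [SigmaFinite μ] [IsLocallyFiniteMeasure μ]
    (hpos : ∀ (t : Ω) (r : ℝ), 0 < r → 0 < μ (Metric.ball t r))
    (N : Ω → X →L[ℂ] X)
    (hcont : ∀ x : X, Continuous fun t => N t x)
    (hNf : ∀ f : Ω → ℂ, Integrable f μ → ∃ T : X →L[ℂ] X,
      ∀ (x : X) (x' : X →L[ℂ] ℂ), x' (T x) = ∫ t, f t * x' (N t x) ∂μ)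
    (C : ℝ)
    (hR : RBounded {T : X →L[ℂ] X | ∃ f : Ω → ℂ, Integrable f μ ∧ (∫ t, ‖f t‖ ∂μ) ≤ 1 ∧
      ∀ (x : X) (x' : X →L[ℂ] ℂ), x' (T x) = ∫ t, f t * x' (N t x) ∂μ} C) :
    RBounded {T : X →L[ℂ] X | ∃ t : Ω, T = N t} C := by
  classical
  set S : Set (X →L[ℂ] X) :=
    {T : X →L[ℂ] X | ∃ f : Ω → ℂ, Integrable f μ ∧ (∫ t, ‖f t‖ ∂μ) ≤ 1 ∧
      ∀ (x : X) (x' : X →L[ℂ] ℂ), x' (T x) = ∫ t, f t * x' (N t x) ∂μ} with hS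
  -- Approximation step: every N t is approximated at x by members of S
  have approx : ∀ (t : Ω) (x : X) (δ : ℝ), 0 < δ →
      ∃ T ∈ S, ‖T x - N t x‖ ≤ δ := by
    intro t x δ hδ
    obtain ⟨r₁, hr₁, hμfin⟩ :=
      (μ.finiteAt_nhds t).exists_mem_basis (Metric.nhds_basis_ball)
    have hc : ContinuousAt (fun s => N s x) t := (hcont x).continuousAt
    rw [Metric.continuousAt_iff] at hc
    obtain ⟨r₂, hr₂, hball⟩ := hc δ hδ
    set r := min r₁ r₂ with hrdef
    have hr : 0 < r := lt_min hr₁ hr₂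
    set B := Metric.ball t r with hB
    have hBmeas : MeasurableSet B := Metric.isOpen_ball.measurableSet
    have hμB_pos : 0 < μ B := hpos t r hr
    have hμB_fin : μ B < ⊤ :=
      lt_of_le_of_lt (measure_mono (Metric.ball_subset_ball (min_le_left _ _))) hμfin
    set m : ℝ := (μ B).toReal with hm
    have hm_pos : 0 < m := ENNReal.toReal_pos hμB_pos.ne' hμB_fin.ne
    set f : Ω → ℂ := fun s => ((B.indicator (fun _ => m⁻¹) s : ℝ) : ℂ) with hf
    have hind_int : Integrable (B.indicator (fun _ => m⁻¹)) μ := by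
      rw [integrable_indicator_iff hBmeas]
      exact integrableOn_const hμB_fin.ne
    have hf_int : Integrable f μ := hind_int.ofReal
    have hfnorm : ∀ s, ‖f s‖ = B.indicator (fun _ => m⁻¹) s := by
      intro s
      by_cases hs : s ∈ B
      · simp [hf, hs, Set.indicator_of_mem, abs_of_nonneg (inv_nonneg.2 hm_pos.le), hm_pos.le]
      · simp [hf, hs, Set.indicator_of_notMem]
    have hnorm_int : (∫ s, ‖f s‖ ∂μ) = 1 := by
      calc (∫ s, ‖f s‖ ∂μ) = ∫ s, B.indicator (fun _ => m⁻¹) s ∂μ := by simp_rw [hfnorm]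
        _ = (μ B).toReal • m⁻¹ := integral_indicator_const _ hBmeas
        _ = 1 := by rw [smul_eq_mul, ← hm, mul_inv_cancel₀ hm_pos.ne']
    have hf_sum : (∫ s, f s ∂μ) = 1 := by
      have : (∫ s, f s ∂μ) = ((∫ s, B.indicator (fun _ => m⁻¹) s ∂μ : ℝ) : ℂ) :=
        integral_ofReal
      rw [this, integral_indicator_const _ hBmeas, smul_eq_mul, measureReal_def, ← hm,
        mul_inv_cancel₀ hm_pos.ne']
      norm_num
    obtain ⟨T, hT⟩ := hNf f hf_int
    refine ⟨T, ⟨f, hf_int, le_of_eq hnorm_int, hT⟩, ?_⟩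
    apply NormedSpace.norm_le_dual_bound ℂ _ hδ.le
    intro x'
    -- integrability of s ↦ f s * x'(N s x)
    have hmeas1 : AEStronglyMeasurable (fun s => ((m⁻¹ : ℝ) : ℂ) * x' (N s x)) μ :=
      (continuous_const.mul (x'.continuous.comp (hcont x))).aestronglyMeasurable
    have hfeq : (fun s => f s * x' (N s x)) =
        B.indicator (fun s => ((m⁻¹ : ℝ) : ℂ) * x' (N s x)) := by
      funext s
      by_cases hs : s ∈ B <;> simp [hf, hs, Set.indicator_of_mem, Set.indicator_of_notMem]
    have hbnd : ∀ s ∈ B, ‖N s x‖ ≤ ‖N t x‖ + δ := by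
      intro s hs
      have hd : dist (N s x) (N t x) < δ := hball (lt_of_lt_of_le hs (min_le_right _ _))
      have := norm_sub_norm_le (N s x) (N t x)
      rw [← dist_eq_norm] at this
      linarith
    have hint1 : Integrable (fun s => f s * x' (N s x)) μ := by
      rw [hfeq, integrable_indicator_iff hBmeas]
      haveI : Fact (μ B < ⊤) := ⟨hμB_fin⟩
      refine Integrable.mono' (g := fun _ => m⁻¹ * (‖x'‖ * (‖N t x‖ + δ)))
        (integrable_const _) (hmeas1.restrict) ?_
      filter_upwards [ae_restrict_mem hBmeas] with s hs
      have h1 : ‖x' (N s x)‖ ≤ ‖x'‖ * ‖N s x‖ := x'.le_opNorm _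
      have h2 := hbnd s hs
      have h3 : ‖x'‖ * ‖N s x‖ ≤ ‖x'‖ * (‖N t x‖ + δ) :=
        mul_le_mul_of_nonneg_left h2 (norm_nonneg _)
      calc ‖((m⁻¹ : ℝ) : ℂ) * x' (N s x)‖ = m⁻¹ * ‖x' (N s x)‖ := by
            rw [norm_mul, Complex.norm_real, Real.norm_eq_abs,
              abs_of_nonneg (inv_nonneg.2 hm_pos.le)]
        _ ≤ m⁻¹ * (‖x'‖ * (‖N t x‖ + δ)) := by
            apply mul_le_mul_of_nonneg_left _ (inv_nonneg.2 hm_pos.le); linarith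
    have hint2 : Integrable (fun s => f s * x' (N t x)) μ := hf_int.mul_const _
    have key : x' (T x) - x' (N t x) = ∫ s, f s * (x' (N s x) - x' (N t x)) ∂μ := by
      have hc2 : (∫ s, f s * x' (N t x) ∂μ) = x' (N t x) := by
        simp_rw [← smul_eq_mul]
        rw [integral_smul_const, hf_sum, one_smul]
      rw [hT x x']
      calc (∫ s, f s * x' (N s x) ∂μ) - x' (N t x)
          = (∫ s, f s * x' (N s x) ∂μ) - ∫ s, f s * x' (N t x) ∂μ := by rw [hc2]
        _ = ∫ s, (f s * x' (N s x) - f s * x' (N t x)) ∂μ := (integral_sub hint1 hint2).symm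
        _ = ∫ s, f s * (x' (N s x) - x' (N t x)) ∂μ := by simp_rw [mul_sub]
    have hb : ∀ s, ‖f s * (x' (N s x) - x' (N t x))‖ ≤ ‖f s‖ * (δ * ‖x'‖) := by
      intro s
      by_cases hs : s ∈ B
      · rw [norm_mul]
        apply mul_le_mul_of_nonneg_left _ (norm_nonneg _)
        have hd : dist (N s x) (N t x) < δ := hball (lt_of_lt_of_le hs (min_le_right _ _))
        have h1 : x' (N s x) - x' (N t x) = x' (N s x - N t x) := (map_sub x' _ _).symm
        rw [h1]
        calc ‖x' (N s x - N t x)‖ ≤ ‖x'‖ * ‖N s x - N t x‖ := x'.le_opNorm _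
          _ ≤ ‖x'‖ * δ := by
              apply mul_le_mul_of_nonneg_left _ (norm_nonneg _)
              rw [← dist_eq_norm]; exact hd.le
          _ = δ * ‖x'‖ := mul_comm _ _
      · simp [hf, hs, Set.indicator_of_notMem]
    have hsub : x' (T x - N t x) = ∫ s, f s * (x' (N s x) - x' (N t x)) ∂μ := by
      rw [map_sub, key]
    calc ‖x' (T x - N t x)‖ = ‖∫ s, f s * (x' (N s x) - x' (N t x)) ∂μ‖ := by rw [hsub]
      _ ≤ ∫ s, ‖f s * (x' (N s x) - x' (N t x))‖ ∂μ := norm_integral_le_integral_norm _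
      _ ≤ ∫ s, ‖f s‖ * (δ * ‖x'‖) ∂μ := by
          have hint3 : Integrable (fun s => f s * (x' (N s x) - x' (N t x))) μ := by
            simp only [mul_sub]; exact hint1.sub hint2
          exact integral_mono hint3.norm (hf_int.norm.mul_const _) hb
      _ = (∫ s, ‖f s‖ ∂μ) * (δ * ‖x'‖) := integral_mul_const _ _
      _ = δ * ‖x'‖ := by rw [hnorm_int, one_mul]
  -- Main argument
  intro n T hT x
  refine le_of_forall_pos_le_add ?_
  intro ε hε
  choose t ht using hT
  set δ := ε / (n + 1) with hδdef
  have hδ : 0 < δ := by positivity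
  choose T' hT'S hT'close using fun i => approx (t i) (x i) δ hδ
  have h1 : radAvg n (fun i => T' i (x i)) ≤ C * radAvg n x := hR n T' hT'S x
  have h2 : radAvg n (fun i => T i (x i)) ≤
      radAvg n (fun i => T' i (x i)) + ∑ i, ‖T i (x i) - T' i (x i)‖ :=
    radAvg_le_radAvg_add n _ _
  have h3 : ∑ i, ‖T i (x i) - T' i (x i)‖ ≤ ε := by
    have hstep : ∀ i ∈ Finset.univ, ‖T i (x i) - T' i (x i)‖ ≤ δ := by
      intro i _
      rw [ht i, norm_sub_rev]
      exact hT'close i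
    calc ∑ i, ‖T i (x i) - T' i (x i)‖ ≤ ∑ _i : Fin n, δ := Finset.sum_le_sum hstep
      _ = n * δ := by rw [Finset.sum_const, Finset.card_univ, Fintype.card_fin, nsmul_eq_mul]
      _ ≤ (n + 1) * δ := by nlinarith
      _ = ε := by rw [hδdef]; field_simp
  linarith
end

section
/- Let X be a Banach space, (Ω, μ) a σ-finite measure space, and N : Ω → B(X) such that t ↦ N(t)x is strongly μ-measurable for every x ∈ X and there is a constant C > 0 with ∫_Ω ‖N(t)x‖ dμ(t) ≤ C ‖x‖ for all x ∈ X. Then for every f ∈ L^∞(Ω, μ) the Bochner integral N_f x = ∫_Ω f(t) N(t)x dμ(t) defines a bounded linear operator N_f on X, and the set {N_f : f ∈ L^∞(Ω,μ), ‖f‖_{L^∞} ≤ 1} is R-bounded with constant at most 2C. -/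
open MeasureTheory Finset

set_option linter.unusedSectionVars false

section Contraction
variable {X : Type*} [NormedAddCommGroup X] [NormedSpace ℝ X] {n : ℕ}

/-- convexity inequality pointwise -/
lemma norm_smul_add_le {a b : X} {s : ℝ} (hs : |s| ≤ 1) :
    ‖s • b + a‖ ≤ (1 + s)/2 * ‖b + a‖ + (1 - s)/2 * ‖(-1 : ℝ) • b + a‖ := by
  rw [abs_le] at hs
  have key : s • b + a = ((1 + s)/2) • (b + a) + ((1 - s)/2) • ((-1 : ℝ) • b + a) := by
    rw [smul_add, smul_add]
    rw [smul_smul]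
    rw [show ((1 - s)/2) * (-1 : ℝ) = -((1-s)/2) by ring]
    module
  rw [key]
  refine (norm_add_le _ _).trans ?_
  rw [norm_smul, norm_smul, Real.norm_eq_abs, Real.norm_eq_abs,
    abs_of_nonneg (by linarith), abs_of_nonneg (by linarith)]

def Fsum (w : Fin n → X) (lam : Fin n → ℝ) : ℝ :=
  ∑ ε : Fin n → Bool, ‖∑ i, lam i • (if ε i then w i else -w i)‖

lemma Fsum_update_neg_one (w : Fin n → X) (lam : Fin n → ℝ) (j : Fin n) :
    Fsum w (Function.update lam j (-1)) = Fsum w (Function.update lam j 1) := by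
  unfold Fsum
  have hinv : Function.Involutive (fun ε : Fin n → Bool => Function.update ε j (!ε j)) := by
    intro ε
    funext i
    by_cases h : i = j <;> simp [h, Function.update_apply]
  refine Fintype.sum_bijective _ hinv.bijective _ _ ?_
  intro ε
  congr 1
  refine Finset.sum_congr rfl fun i _ => ?_
  by_cases h : i = j
  · subst h
    simp only [Function.update_self]
    cases hb : ε i <;> simp [hb, Function.update_apply]
  · simp [Function.update_apply, h]

lemma Fsum_nonneg (w : Fin n → X) (lam : Fin n → ℝ) : 0 ≤ Fsum w lam :=
  Finset.sum_nonneg fun _ _ => norm_nonneg _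

lemma Fsum_update_le (w : Fin n → X) (lam : Fin n → ℝ) (j : Fin n) {s : ℝ} (hs : |s| ≤ 1) :
    Fsum w (Function.update lam j s) ≤ Fsum w (Function.update lam j 1) := by
  have key : ∀ (c : ℝ) (ε : Fin n → Bool),
      ∑ i, (Function.update lam j c) i • (if ε i then w i else -w i)
        = c • (if ε j then w j else -w j) +
          ∑ i ∈ univ.erase j, lam i • (if ε i then w i else -w i) := by
    intro c ε
    rw [← Finset.add_sum_erase _ _ (Finset.mem_univ j), Function.update_self]
    congr 1
    refine Finset.sum_congr rfl fun i hi => ?_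
    rw [Function.update_of_ne (Finset.ne_of_mem_erase hi)]
  have step : Fsum w (Function.update lam j s) ≤
      (1 + s)/2 * Fsum w (Function.update lam j 1) +
      (1 - s)/2 * Fsum w (Function.update lam j (-1)) := by
    unfold Fsum
    rw [Finset.mul_sum, Finset.mul_sum, ← Finset.sum_add_distrib]
    refine Finset.sum_le_sum fun ε _ => ?_
    rw [key s ε, key 1 ε, key (-1) ε, one_smul]
    exact norm_smul_add_le hs
  rw [Fsum_update_neg_one] at step
  calc Fsum w (Function.update lam j s) ≤ _ := step
    _ = Fsum w (Function.update lam j 1) := by ring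

lemma Fsum_le_one (w : Fin n → X) :
    ∀ (t : Finset (Fin n)) (lam : Fin n → ℝ), (∀ i, |lam i| ≤ 1) →
      (∀ i ∉ t, lam i = 1) → Fsum w lam ≤ Fsum w (fun _ => 1) := by
  intro t
  induction t using Finset.induction_on with
  | empty =>
    intro lam _ h1
    have : lam = fun _ => 1 := funext fun i => h1 i (by simp)
    rw [this]
  | insert j t' hj ih =>
    intro lam hlam h1
    have hup : lam = Function.update lam j (lam j) := by
      funext i; by_cases h : i = j <;> simp [h, Function.update_apply]
    calc Fsum w lam = Fsum w (Function.update lam j (lam j)) := by rw [← hup]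
      _ ≤ Fsum w (Function.update lam j 1) := Fsum_update_le w lam j (hlam j)
      _ ≤ Fsum w (fun _ => 1) := by
          refine ih _ (fun i => ?_) (fun i hi => ?_)
          · by_cases h : i = j
            · subst h; rw [Function.update_self]; norm_num
            · rw [Function.update_of_ne h]; exact hlam i
          · by_cases h : i = j
            · subst h; rw [Function.update_self]
            · rw [Function.update_of_ne h]
              exact h1 i (by simp [h, hi])

lemma radAvg_contraction_real (w : Fin n → X) (lam : Fin n → ℝ) (hlam : ∀ i, |lam i| ≤ 1) :
    radAvg n (fun i => lam i • w i) ≤ radAvg n w := by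
  unfold radAvg
  have h1 : ∀ (ε : Fin n → Bool) (i : Fin n),
      (if ε i then lam i • w i else -(lam i • w i)) = lam i • (if ε i then w i else -w i) := by
    intro ε i; cases hb : ε i <;> simp
  have := Fsum_le_one w Finset.univ lam hlam (by simp)
  unfold Fsum at this
  simp only [one_smul] at this
  simp only [h1]
  exact mul_le_mul_of_nonneg_left this (by positivity)

end Contraction

section ComplexContraction
variable {X : Type*} [NormedAddCommGroup X] [NormedSpace ℂ X] {n : ℕ}

lemma radAvg_add_le (v u : Fin n → X) :
    radAvg n (fun i => v i + u i) ≤ radAvg n v + radAvg n u := by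
  unfold radAvg
  rw [← mul_add, ← Finset.sum_add_distrib]
  refine mul_le_mul_of_nonneg_left (Finset.sum_le_sum fun ε _ => ?_) (by positivity)
  have : ∀ i, (if ε i then v i + u i else -(v i + u i))
      = (if ε i then v i else -v i) + (if ε i then u i else -u i) := by
    intro i; cases hb : ε i <;> simp [neg_add] <;> abel
  simp only [this, Finset.sum_add_distrib]
  exact norm_add_le _ _

lemma radAvg_smul_I (w : Fin n → X) :
    radAvg n (fun i => (Complex.I : ℂ) • w i) = radAvg n w := by
  unfold radAvg
  congr 1
  refine Finset.sum_congr rfl fun ε _ => ?_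
  have : ∀ i, (if ε i then Complex.I • w i else -(Complex.I • w i))
      = Complex.I • (if ε i then w i else -w i) := by
    intro i; cases hb : ε i <;> simp
  simp only [this, ← Finset.smul_sum, norm_smul, Complex.norm_I, one_mul]

lemma radAvg_contraction_complex (a : Fin n → ℂ) (ha : ∀ i, ‖a i‖ ≤ 1) (w : Fin n → X) :
    radAvg n (fun i => a i • w i) ≤ 2 * radAvg n w := by
  have hdecomp : ∀ i, a i • w i = (a i).re • w i + (a i).im • (Complex.I • w i) := by
    intro i
    have : a i = ((a i).re : ℂ) + ((a i).im : ℂ) * Complex.I := (Complex.re_add_im (a i)).symm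
    rw [show ((a i).re : ℝ) • w i = ((a i).re : ℂ) • w i from (Complex.coe_smul _ _).symm,
      show ((a i).im : ℝ) • (Complex.I • w i) = ((a i).im : ℂ) • (Complex.I • w i) from
        (Complex.coe_smul _ _).symm, smul_smul, ← add_smul]
    exact congrArg (· • w i) this
  have hre : ∀ i, |(a i).re| ≤ 1 := fun i => (Complex.abs_re_le_norm _).trans (ha i)
  have him : ∀ i, |(a i).im| ≤ 1 := fun i => (Complex.abs_im_le_norm _).trans (ha i)
  calc radAvg n (fun i => a i • w i)
      = radAvg n (fun i => (a i).re • w i + (a i).im • (Complex.I • w i)) := by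
        simp only [hdecomp]
    _ ≤ radAvg n (fun i => (a i).re • w i) + radAvg n (fun i => (a i).im • (Complex.I • w i)) :=
        radAvg_add_le _ _
    _ ≤ radAvg n w + radAvg n (fun i => Complex.I • w i) :=
        add_le_add (radAvg_contraction_real w _ hre)
          (radAvg_contraction_real (fun i => Complex.I • w i) _ him)
    _ = 2 * radAvg n w := by rw [radAvg_smul_I]; ring

end ComplexContraction

/-- If `N : Ω → B(X)` is strongly measurable and
`∫ ‖N(t)x‖ dμ(t) ≤ C‖x‖` for all `x`, then for every `f ∈ L^∞(Ω,μ)` the Bochner integral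
`N_f x = ∫ f(t) N(t)x dμ(t)` defines a bounded operator, and `{N_f : ‖f‖_{L^∞} ≤ 1}` is
`R`-bounded with constant at most `2C`. -/
theorem stmt_14 {X : Type*} [NormedAddCommGroup X] [NormedSpace ℂ X] [CompleteSpace X]
    {Ω : Type*} [MeasurableSpace Ω] (μ : Measure Ω) [SigmaFinite μ]
    (N : Ω → X →L[ℂ] X)
    (hmeas : ∀ x : X, AEStronglyMeasurable (fun t => N t x) μ)
    (C : ℝ) (hC : 0 < C)
    (hint : ∀ x : X, ∫⁻ t, (‖N t x‖₊ : ENNReal) ∂μ ≤ ENNReal.ofReal (C * ‖x‖)) :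
    (∀ f : Ω → ℂ, MemLp f ⊤ μ →
      (∀ x : X, Integrable (fun t => f t • N t x) μ) ∧
      ∃ T : X →L[ℂ] X, ∀ x : X, T x = ∫ t, f t • N t x ∂μ) ∧
    RBounded {T : X →L[ℂ] X | ∃ f : Ω → ℂ, MemLp f ⊤ μ ∧ eLpNorm f ⊤ μ ≤ 1 ∧
      ∀ x : X, T x = ∫ t, f t • N t x ∂μ} (2 * C) := by
  have intN : ∀ x : X, Integrable (fun t => N t x) μ := fun x =>
    ⟨hmeas x, (hint x).trans_lt ENNReal.ofReal_lt_top⟩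
  have realbound : ∀ x : X, ∫ t, ‖N t x‖ ∂μ ≤ C * ‖x‖ := by
    intro x
    rw [integral_norm_eq_lintegral_enorm (hmeas x)]
    exact ENNReal.toReal_le_of_le_ofReal (by positivity) (hint x)
  have lchain : ∀ f : Ω → ℂ, MemLp f ⊤ μ → ∀ x : X,
      ∫⁻ t, (‖f t • N t x‖₊ : ENNReal) ∂μ ≤ eLpNormEssSup f μ * ENNReal.ofReal (C * ‖x‖) := by
    intro f hf x
    have hlt : eLpNormEssSup f μ < ⊤ := by rw [← eLpNorm_exponent_top]; exact hf.2
    calc ∫⁻ t, (‖f t • N t x‖₊ : ENNReal) ∂μ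
        = ∫⁻ t, (‖f t‖₊ : ENNReal) * (‖N t x‖₊ : ENNReal) ∂μ := by
          simp [nnnorm_smul, ENNReal.coe_mul]
      _ ≤ ∫⁻ t, eLpNormEssSup f μ * (‖N t x‖₊ : ENNReal) ∂μ := by
          refine lintegral_mono_ae ((ae_le_eLpNormEssSup (f := f) (μ := μ)).mono fun t ht => ?_)
          exact mul_le_mul_left ht _
      _ = eLpNormEssSup f μ * ∫⁻ t, (‖N t x‖₊ : ENNReal) ∂μ :=
          lintegral_const_mul' _ _ hlt.ne
      _ ≤ eLpNormEssSup f μ * ENNReal.ofReal (C * ‖x‖) := mul_le_mul_right (hint x) _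
  have key_int : ∀ f : Ω → ℂ, MemLp f ⊤ μ → ∀ x : X,
      Integrable (fun t => f t • N t x) μ := by
    intro f hf x
    have hlt : eLpNormEssSup f μ < ⊤ := by rw [← eLpNorm_exponent_top]; exact hf.2
    refine ⟨hf.1.smul (hmeas x), ?_⟩
    refine (lchain f hf x).trans_lt ?_
    exact ENNReal.mul_lt_top hlt ENNReal.ofReal_lt_top
  have part1 : ∀ f : Ω → ℂ, MemLp f ⊤ μ →
      (∀ x : X, Integrable (fun t => f t • N t x) μ) ∧
      ∃ T : X →L[ℂ] X, ∀ x : X, T x = ∫ t, f t • N t x ∂μ := by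
    intro f hf
    refine ⟨key_int f hf, ?_⟩
    have hlt : eLpNormEssSup f μ < ⊤ := by rw [← eLpNorm_exponent_top]; exact hf.2
    let L : X →ₗ[ℂ] X :=
      { toFun := fun x => ∫ t, f t • N t x ∂μ
        map_add' := fun x y => by
          simp only [map_add, smul_add]
          exact integral_add (key_int f hf x) (key_int f hf y)
        map_smul' := fun c x => by
          simp only [RingHom.id_apply]
          rw [← integral_smul]
          congr 1; funext t
          rw [(N t).map_smul, smul_comm] }
    refine ⟨L.mkContinuous ((eLpNormEssSup f μ).toReal * C) fun x => ?_, fun x => rfl⟩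
    calc ‖∫ t, f t • N t x ∂μ‖ ≤ ∫ t, ‖f t • N t x‖ ∂μ := norm_integral_le_integral_norm _
      _ = (∫⁻ t, (‖f t • N t x‖₊ : ENNReal) ∂μ).toReal := by
          exact integral_norm_eq_lintegral_enorm (hf.1.smul (hmeas x))
      _ ≤ ((eLpNormEssSup f μ) * ENNReal.ofReal (C * ‖x‖)).toReal := by
          refine ENNReal.toReal_mono ?_ (lchain f hf x)
          exact (ENNReal.mul_lt_top hlt ENNReal.ofReal_lt_top).ne
      _ = (eLpNormEssSup f μ).toReal * (C * ‖x‖) := by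
          rw [ENNReal.toReal_mul, ENNReal.toReal_ofReal (by positivity)]
      _ = (eLpNormEssSup f μ).toReal * C * ‖x‖ := by ring
  refine ⟨part1, ?_⟩
  intro n T hT x
  choose f hmem hb hTx using hT
  have hfae : ∀ᵐ t ∂μ, ∀ i, ‖f i t‖ ≤ 1 := by
    rw [ae_all_iff]
    intro i
    have h2 : eLpNormEssSup (f i) μ ≤ 1 := by rw [← eLpNorm_exponent_top]; exact hb i
    refine (ae_le_eLpNormEssSup (f := f i) (μ := μ)).mono fun t ht => ?_
    have h3 : (‖f i t‖₊ : ENNReal) ≤ 1 := ht.trans h2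
    have h4 : ‖f i t‖₊ ≤ 1 := by exact_mod_cast h3
    exact_mod_cast h4
  set G : (Fin n → Bool) → Ω → X :=
    fun ε t => ∑ i, (if ε i then f i t • N t (x i) else -(f i t • N t (x i))) with hG
  set H : (Fin n → Bool) → Ω → X :=
    fun ε t => ∑ i, (if ε i then N t (x i) else -(N t (x i))) with hH
  set y : (Fin n → Bool) → X := fun ε => ∑ i, (if ε i then x i else -(x i)) with hy
  have intGi : ∀ (ε : Fin n → Bool) (i : Fin n),
      Integrable (fun t => if ε i then f i t • N t (x i) else -(f i t • N t (x i))) μ := by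
    intro ε i
    cases hε : ε i
    · have h := (key_int (f i) (hmem i) (x i)).neg
      refine h.congr (Filter.Eventually.of_forall fun t => ?_)
      simp [hε]
    · have h := key_int (f i) (hmem i) (x i)
      refine h.congr (Filter.Eventually.of_forall fun t => ?_)
      simp [hε]
  have intG : ∀ ε, Integrable (G ε) μ := fun ε => integrable_finset_sum _ fun i _ => intGi ε i
  have hHy : ∀ ε t, H ε t = N t (y ε) := by
    intro ε t
    rw [hH, hy]
    simp only [map_sum]
    refine Finset.sum_congr rfl fun i _ => ?_
    cases hε : ε i <;> simp [hε]
  have intH : ∀ ε, Integrable (fun t => ‖H ε t‖) μ := by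
    intro ε
    simp only [hHy]
    exact (intN (y ε)).norm
  have stepA : ∀ ε : Fin n → Bool,
      ∑ i, (if ε i then T i (x i) else -(T i (x i))) = ∫ t, G ε t ∂μ := by
    intro ε
    rw [hG]
    rw [integral_finset_sum _ (fun i _ => intGi ε i)]
    refine Finset.sum_congr rfl fun i _ => ?_
    cases hε : ε i <;> simp [hε, integral_neg, hTx i (x i)]
  have c0 : (0:ℝ) ≤ ((2:ℝ)^n)⁻¹ := by positivity
  calc radAvg n (fun i => T i (x i))
      = ((2:ℝ)^n)⁻¹ * ∑ ε : Fin n → Bool, ‖∫ t, G ε t ∂μ‖ := by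
        unfold radAvg
        exact congrArg _ (Finset.sum_congr rfl fun ε _ => by rw [← stepA ε])
    _ ≤ ((2:ℝ)^n)⁻¹ * ∑ ε : Fin n → Bool, ∫ t, ‖G ε t‖ ∂μ :=
        mul_le_mul_of_nonneg_left
          (Finset.sum_le_sum fun ε _ => norm_integral_le_integral_norm _) c0
    _ = ∫ t, ((2:ℝ)^n)⁻¹ * ∑ ε : Fin n → Bool, ‖G ε t‖ ∂μ := by
        rw [integral_const_mul, integral_finset_sum _ (fun ε _ => (intG ε).norm)]
    _ ≤ ∫ t, 2 * (((2:ℝ)^n)⁻¹ * ∑ ε : Fin n → Bool, ‖H ε t‖) ∂μ := by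
        refine integral_mono_ae
          ((integrable_finset_sum _ fun ε _ => (intG ε).norm).const_mul _)
          (((integrable_finset_sum _ fun ε _ => intH ε).const_mul _).const_mul _) ?_
        refine hfae.mono fun t ht => ?_
        have := radAvg_contraction_complex (fun i => f i t) ht (fun i => N t (x i))
        simpa only [radAvg, hG, hH] using this
    _ = 2 * (((2:ℝ)^n)⁻¹ * ∑ ε : Fin n → Bool, ∫ t, ‖H ε t‖ ∂μ) := by
        rw [integral_const_mul, integral_const_mul, integral_finset_sum _ (fun ε _ => intH ε)]
    _ ≤ 2 * (((2:ℝ)^n)⁻¹ * ∑ ε : Fin n → Bool, C * ‖y ε‖) := by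
        refine mul_le_mul_of_nonneg_left
          (mul_le_mul_of_nonneg_left (Finset.sum_le_sum fun ε _ => ?_) c0) (by norm_num)
        simp only [hHy]
        exact realbound (y ε)
    _ = 2 * C * radAvg n x := by
        have hrad : radAvg n x = ((2:ℝ)^n)⁻¹ * ∑ ε : Fin n → Bool, ‖y ε‖ := rfl
        rw [hrad, ← Finset.mul_sum]
        ring
end

section
/- Let X be a Banach space with dual X', let (Ω₁, μ₁) and (Ω₂, μ₂) be σ-finite measure spaces, and let K : L²(Ω₁, μ₁) → L²(Ω₂, μ₂) be a bounded linear operator with adjoint K*. Let N : Ω₁ → B(X) and M : Ω₂ → B(X) be families of bounded operators such that for all x ∈ X and x' ∈ X' the function ⟨N(·)x, x'⟩ belongs to L²(Ω₁, μ₁) and ⟨M(·)x, x'⟩ = K(⟨N(·)x, x'⟩) in L²(Ω₂, μ₂). Suppose that for every f ∈ L²(Ω₁, μ₁) there is a bounded operator N_f ∈ B(X) with ⟨N_f x, x'⟩ = ∫_{Ω₁} f(t) ⟨N(t)x, x'⟩ dμ₁(t) for all x ∈ X, x' ∈ X', and that the set {N_f : ‖f‖_{L²(Ω₁)} ≤ 1}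 is R-bounded with constant C. Then for every g ∈ L²(Ω₂, μ₂) there is a bounded operator M_g ∈ B(X) with ⟨M_g x, x'⟩ = ∫_{Ω₂} g(t) ⟨M(t)x, x'⟩ dμ₂(t) for all x ∈ X, x' ∈ X' (namely M_g = N_{K*g}), and the set {M_g : ‖g‖_{L²(Ω₂)} ≤ 1} is R-bounded with constant at most ‖K‖ · C. -/
open MeasureTheory
open scoped ENNReal NNReal

lemma radAvg_zero {X : Type*} [NormedAddCommGroup X] (n : ℕ) :
    radAvg n (fun _ : Fin n => (0 : X)) = 0 := by
  simp [radAvg]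

lemma radAvg_smul {X : Type*} [NormedAddCommGroup X] [Module ℝ X] [NormSMulClass ℝ X]
    (n : ℕ) (r : ℝ) (v : Fin n → X) :
    radAvg n (fun i => r • v i) = |r| * radAvg n v := by
  unfold radAvg
  rw [Finset.mul_sum, Finset.mul_sum, Finset.mul_sum]
  congr 1
  ext ε
  have : ∀ i, (if ε i then r • v i else -(r • v i)) = r • (if ε i then v i else -v i) := by
    intro i; by_cases h : ε i <;> simp [h, smul_neg]
  simp_rw [this, ← Finset.smul_sum, norm_smul, Real.norm_eq_abs]
  ring

lemma memLp_conj {Ω : Type*} [MeasurableSpace Ω] {μ : Measure Ω} {g : Ω → ℂ} {p : ENNReal}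
    (h : MemLp g p μ) : MemLp (fun t => (starRingEnd ℂ) (g t)) p μ :=
  ⟨RCLike.continuous_conj.comp_aestronglyMeasurable h.1, by
    rw [eLpNorm_congr_norm_ae (Filter.Eventually.of_forall fun t => RCLike.norm_conj (g t))]
    exact h.2⟩

lemma eLpNorm_conj' {Ω : Type*} [MeasurableSpace Ω] (μ : Measure Ω) (g : Ω → ℂ) (p : ENNReal) :
    eLpNorm (fun t => (starRingEnd ℂ) (g t)) p μ = eLpNorm g p μ :=
  eLpNorm_congr_norm_ae (Filter.Eventually.of_forall fun t => RCLike.norm_conj (g t))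

lemma key_lemma {X : Type*} [NormedAddCommGroup X] [NormedSpace ℂ X] [CompleteSpace X]
    {Ω₁ : Type*} [MeasurableSpace Ω₁] (μ₁ : Measure Ω₁)
    {Ω₂ : Type*} [MeasurableSpace Ω₂] (μ₂ : Measure Ω₂)
    (K : Lp ℂ 2 μ₁ →L[ℂ] Lp ℂ 2 μ₂)
    (N : Ω₁ → X →L[ℂ] X) (M : Ω₂ → X →L[ℂ] X)
    (hmem : ∀ (x : X) (x' : X →L[ℂ] ℂ), MemLp (fun t => x' (N t x)) 2 μ₁)
    (hKM : ∀ (x : X) (x' : X →L[ℂ] ℂ),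
      (fun t => x' (M t x)) =ᵐ[μ₂] ⇑(K (MemLp.toLp _ (hmem x x'))))
    (g : Ω₂ → ℂ) (hg : MemLp g 2 μ₂) :
    ∃ f : Ω₁ → ℂ, MemLp f 2 μ₁ ∧ eLpNorm f 2 μ₁ ≤ ‖K‖₊ * eLpNorm g 2 μ₂ ∧
      ∀ (x : X) (x' : X →L[ℂ] ℂ),
        (∫ t, f t * x' (N t x) ∂μ₁) = ∫ t, g t * x' (M t x) ∂μ₂ := by
  have hg' : MemLp (fun t => (starRingEnd ℂ) (g t)) 2 μ₂ := memLp_conj hg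
  set Gs : Lp ℂ 2 μ₂ := hg'.toLp _ with hGs
  set φ : Lp ℂ 2 μ₁ := (ContinuousLinearMap.adjoint K) Gs with hφ
  refine ⟨fun t => (starRingEnd ℂ) ((φ : Ω₁ → ℂ) t), memLp_conj (Lp.memLp φ), ?_, ?_⟩
  · rw [eLpNorm_conj', ← Lp.enorm_def φ, enorm_eq_nnnorm]
    have hGsn : (‖Gs‖₊ : ℝ≥0∞) = eLpNorm g 2 μ₂ := by
      rw [hGs, ← enorm_eq_nnnorm, Lp.enorm_toLp, eLpNorm_conj']
    rw [← hGsn, ← ENNReal.coe_mul, ENNReal.coe_le_coe, ← NNReal.coe_le_coe]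
    push_cast
    calc ‖φ‖ ≤ ‖ContinuousLinearMap.adjoint K‖ * ‖Gs‖ := ContinuousLinearMap.le_opNorm _ _
    _ = ‖K‖ * ‖Gs‖ := by rw [LinearIsometryEquiv.norm_map]
  · intro x x'
    set Ψ : Lp ℂ 2 μ₁ := (hmem x x').toLp _ with hΨ
    calc (∫ t, (starRingEnd ℂ) ((φ : Ω₁ → ℂ) t) * x' (N t x) ∂μ₁)
        = ∫ t, (starRingEnd ℂ) ((φ : Ω₁ → ℂ) t) * (Ψ : Ω₁ → ℂ) t ∂μ₁ := by
          refine integral_congr_ae ?_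
          filter_upwards [(hmem x x').coeFn_toLp] with t ht
          rw [ht]
      _ = @inner ℂ _ _ φ Ψ := by
          rw [L2.inner_def]
          simp_rw [RCLike.inner_apply]
          exact integral_congr_ae (Filter.Eventually.of_forall fun t => mul_comm _ _)
      _ = @inner ℂ _ _ Gs (K Ψ) := ContinuousLinearMap.adjoint_inner_left K Ψ Gs
      _ = ∫ t, (starRingEnd ℂ) ((Gs : Ω₂ → ℂ) t) * (K Ψ : Ω₂ → ℂ) t ∂μ₂ := by
          rw [L2.inner_def]
          simp_rw [RCLike.inner_apply]
          exact integral_congr_ae (Filter.Eventually.of_forall fun t => mul_comm _ _)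
      _ = ∫ t, g t * x' (M t x) ∂μ₂ := by
          refine integral_congr_ae ?_
          filter_upwards [hg'.coeFn_toLp, hKM x x'] with t h1 h2
          rw [h1, h2, Complex.conj_conj]

/-- Let `K : L²(Ω₁,μ₁) → L²(Ω₂,μ₂)` be bounded, and let
`N : Ω₁ → B(X)`, `M : Ω₂ → B(X)` satisfy `⟨N(·)x, x'⟩ ∈ L²(Ω₁)` and
`⟨M(·)x, x'⟩ = K(⟨N(·)x, x'⟩)` in `L²(Ω₂)` for all `x, x'`. If for every `f ∈ L²(Ω₁)` there is
`N_f ∈ B(X)` with `⟨N_f x, x'⟩ = ∫ f(t)⟨N(t)x, x'⟩ dμ₁(t)` and `{N_f : ‖f‖ ≤ 1}` is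
`R`-bounded with constant `C`, then for every `g ∈ L²(Ω₂)` there is `M_g ∈ B(X)` with
`⟨M_g x, x'⟩ = ∫ g(t)⟨M(t)x, x'⟩ dμ₂(t)`, and `{M_g : ‖g‖ ≤ 1}` is `R`-bounded with
constant at most `‖K‖·C`. -/
theorem stmt_17 {X : Type*} [NormedAddCommGroup X] [NormedSpace ℂ X] [CompleteSpace X]
    {Ω₁ : Type*} [MeasurableSpace Ω₁] (μ₁ : Measure Ω₁) [SigmaFinite μ₁]
    {Ω₂ : Type*} [MeasurableSpace Ω₂] (μ₂ : Measure Ω₂) [SigmaFinite μ₂]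
    (K : Lp ℂ 2 μ₁ →L[ℂ] Lp ℂ 2 μ₂)
    (N : Ω₁ → X →L[ℂ] X) (M : Ω₂ → X →L[ℂ] X)
    (hmem : ∀ (x : X) (x' : X →L[ℂ] ℂ), MemLp (fun t => x' (N t x)) 2 μ₁)
    (hKM : ∀ (x : X) (x' : X →L[ℂ] ℂ),
      (fun t => x' (M t x)) =ᵐ[μ₂] ⇑(K (MemLp.toLp _ (hmem x x'))))
    (hNf : ∀ f : Ω₁ → ℂ, MemLp f 2 μ₁ → ∃ T : X →L[ℂ] X,
      ∀ (x : X) (x' : X →L[ℂ] ℂ), x' (T x) = ∫ t, f t * x' (N t x) ∂μ₁)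
    (C : ℝ)
    (hR : RBounded {T : X →L[ℂ] X | ∃ f : Ω₁ → ℂ, MemLp f 2 μ₁ ∧ eLpNorm f 2 μ₁ ≤ 1 ∧
      ∀ (x : X) (x' : X →L[ℂ] ℂ), x' (T x) = ∫ t, f t * x' (N t x) ∂μ₁} C) :
    (∀ g : Ω₂ → ℂ, MemLp g 2 μ₂ → ∃ T : X →L[ℂ] X,
      ∀ (x : X) (x' : X →L[ℂ] ℂ), x' (T x) = ∫ t, g t * x' (M t x) ∂μ₂) ∧
    RBounded {T : X →L[ℂ] X | ∃ g : Ω₂ → ℂ, MemLp g 2 μ₂ ∧ eLpNorm g 2 μ₂ ≤ 1 ∧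
      ∀ (x : X) (x' : X →L[ℂ] ℂ), x' (T x) = ∫ t, g t * x' (M t x) ∂μ₂} (‖K‖ * C) := by
  constructor
  · intro g hg
    obtain ⟨f, hf, -, hfeq⟩ := key_lemma μ₁ μ₂ K N M hmem hKM g hg
    obtain ⟨T, hT⟩ := hNf f hf
    exact ⟨T, fun x x' => (hT x x').trans (hfeq x x')⟩
  · intro n T hT x
    by_cases hK : ‖K‖ = 0
    · have hK0 : K = 0 := norm_eq_zero.mp hK
      have hTz : ∀ i, T i (x i) = 0 := by
        intro i
        obtain ⟨g, hg, hg1, hTg⟩ := hT i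
        refine NormedSpace.eq_zero_of_forall_dual_eq_zero ℂ fun x' => ?_
        rw [hTg (x i) x']
        refine integral_eq_zero_of_ae ?_
        filter_upwards [hKM (x i) x', Lp.coeFn_zero ℂ 2 μ₂] with t h1 h2
        rw [h1, hK0]
        simp only [ContinuousLinearMap.zero_apply, h2, Pi.zero_apply, mul_zero]
      have : (fun i => T i (x i)) = fun _ => (0 : X) := funext hTz
      rw [this, radAvg_zero, hK, zero_mul, zero_mul]
    · have hKpos : 0 < ‖K‖ := lt_of_le_of_ne (norm_nonneg K) (Ne.symm hK)
      set T' : Fin n → X →L[ℂ] X := fun i => (‖K‖⁻¹ : ℝ) • T i with hT'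
      have hmemT' : ∀ i, T' i ∈ {T : X →L[ℂ] X | ∃ f : Ω₁ → ℂ, MemLp f 2 μ₁ ∧
          eLpNorm f 2 μ₁ ≤ 1 ∧
          ∀ (x : X) (x' : X →L[ℂ] ℂ), x' (T x) = ∫ t, f t * x' (N t x) ∂μ₁} := by
        intro i
        obtain ⟨g, hg, hg1, hTg⟩ := hT i
        obtain ⟨f, hf, hfle, hfeq⟩ := key_lemma μ₁ μ₂ K N M hmem hKM g hg
        refine ⟨fun t => ((‖K‖⁻¹ : ℝ) : ℂ) * f t, hf.const_mul _, ?_, ?_⟩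
        · have hsm : (fun t => ((‖K‖⁻¹ : ℝ) : ℂ) * f t) = ((‖K‖⁻¹ : ℝ) : ℂ) • f := rfl
          have hKne : ‖K‖₊ ≠ 0 := by
            intro h
            exact hK (by rw [← coe_nnnorm, h, NNReal.coe_zero])
          have hnn : ‖((‖K‖⁻¹ : ℝ) : ℂ)‖ₑ = (‖K‖₊ : ℝ≥0∞)⁻¹ := by
            rw [enorm_eq_nnnorm, Complex.nnnorm_real, nnnorm_inv, nnnorm_norm, ENNReal.coe_inv hKne]
          rw [hsm, eLpNorm_const_smul, hnn]
          calc ((‖K‖₊ : ℝ≥0∞))⁻¹ * eLpNorm f 2 μ₁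
              ≤ ((‖K‖₊ : ℝ≥0∞))⁻¹ * (‖K‖₊ * eLpNorm g 2 μ₂) :=
                mul_le_mul_right hfle _
            _ ≤ ((‖K‖₊ : ℝ≥0∞))⁻¹ * (‖K‖₊ * 1) :=
                mul_le_mul_right (mul_le_mul_right hg1 _) _
            _ = ((‖K‖₊ : ℝ≥0∞))⁻¹ * ‖K‖₊ := by rw [mul_one]
            _ = 1 := ENNReal.inv_mul_cancel (by exact_mod_cast hKne) ENNReal.coe_ne_top
        · intro y y'
          have h1 : y' ((T' i) y) = ((‖K‖⁻¹ : ℝ) : ℂ) * y' (T i y) := by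
            rw [hT', ContinuousLinearMap.smul_apply, ContinuousLinearMap.map_smul_of_tower, Complex.real_smul]
          rw [h1, hTg y y', ← hfeq y y', ← integral_const_mul]
          simp_rw [mul_assoc]
      have hle := hR n T' hmemT' x
      have heq : (fun i => T i (x i)) = fun i => ‖K‖ • (T' i (x i)) := by
        funext i
        rw [hT']
        simp only [ContinuousLinearMap.smul_apply]
        rw [smul_smul, mul_inv_cancel₀ hK, one_smul]
      rw [heq, radAvg_smul, abs_of_nonneg (norm_nonneg K), mul_assoc]
      exact mul_le_mul_of_nonneg_left hle (norm_nonneg K)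
end
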